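/- Let n' be the positive integer with binary expansion n' = 2^1 + 2^3 + ··· + 2^{2s−1} (alternating digits 0,1,0,1,… up to position 2s−1). Then for 1 ≤ m ≤ s, α_{2m}(n') = (2^{2m+1} − 2)/3 and α_{2m−1}(n') = (2^{2m} + 2)/3. -/

import Mathlib

open MeasureTheory Finset

noncomputable section

/-- The dyadic group: countable product of ℤ/2. -/
abbrev G := ℕ → ZMod 2

/-- Binary digits of a real number, as an element of the dyadic group. -/
def toG (x : ℝ) : G := fun n => ((⌊x * 2 ^ (n + 1)⌋ : ℤ) : ZMod 2)

/-- Haar (product) measure on the dyadic group, realized as the pushforward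
of Lebesgue measure on `[0,1)` under the binary digit map. -/
def muG : Measure G := (volume.restrict (Set.Ico (0:ℝ) 1)).map toG

/-- Walsh–Paley functions. -/
def walsh (m : ℕ) (x : G) : ℝ :=
  ∏ k ∈ Finset.range m, if m.testBit k then (-1 : ℝ) ^ ((x k).val) else 1

/-- Walsh–Dirichlet kernel. -/
def Dir (n : ℕ) (x : G) : ℝ := ∑ k ∈ Finset.range n, walsh k x

/-- Dyadic interval `I_n` of rank `n` about `0`. -/
def Iset (n : ℕ) : Set G := {x | ∀ i < n, x i = 0}

/-- `k`-th binary digit of `n`, as a natural number. -/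
def bit (n k : ℕ) : ℕ := (n.testBit k).toNat

/-- `α_i(n) = |∑_{k<i} n_k 2^k − n_i 2^i|`. -/
def alpha (n i : ℕ) : ℤ :=
  |(∑ k ∈ Finset.range i, (bit n k : ℤ) * 2 ^ k) - (bit n i : ℤ) * 2 ^ i|

/-- Binary variation `V(n) = n_0 + ∑_{k≥1} |n_k − n_{k−1}|`. -/
def V (n : ℕ) : ℕ :=
  bit n 0 + ∑ k ∈ Finset.range n, if n.testBit (k+1) ≠ n.testBit k then 1 else 0

/-- `A(n)`: indices where consecutive binary digits differ (with `n_{−1} = 0`). -/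
def Aset (n : ℕ) : Finset ℕ :=
  (Finset.range (n+1)).filter
    (fun i => if i = 0 then n.testBit 0 else n.testBit i ≠ n.testBit (i-1))

/-- `S(n) = ∑_{i ∈ A(n)} α_i(n)/2^{i+1}`. -/
def S (n : ℕ) : ℝ := ∑ i ∈ Aset n, (alpha n i : ℝ) / 2 ^ (i+1)

/-- `j`-th binary digit of a real number `t ∈ [0,1)`. -/
def tdig (t : ℝ) (j : ℕ) : ℕ := (⌊t * 2 ^ (j+1)⌋ % 2).toNat

/-- `m = ∑_{i=0}^{N-1} t_{i+1} 2^i`. -/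
def mOf (t : ℝ) (N : ℕ) : ℕ := ∑ i ∈ Finset.range N, tdig t (i+1) * 2 ^ i

/-- Conjugate Walsh–Dirichlet kernel
`D̃_n^{(t)} = D_n − 2 w_m D_m − 2 t_{N+1}(D_n − D_{2^N})` where `m = mOf t N`. -/
def Dconj (t : ℝ) (N n : ℕ) (x : G) : ℝ :=
  Dir n x - 2 * walsh (mOf t N) x * Dir (mOf t N) x
    - 2 * (tdig t (N+1) : ℝ) * (Dir n x - Dir (2^N) x)

/-- Lebesgue constant of the conjugate transform. -/
def Leb (t : ℝ) (N n : ℕ) : ℝ := ∫ x, |Dconj t N n x| ∂muG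

/-- `T(a,b) = {i : 1 ≤ i ≤ N−1, a_i ≠ a_{i−1}, b_i = b_{i−1}}`. -/
def Tset (N a b : ℕ) : Finset ℕ :=
  (Finset.Icc 1 (N-1)).filter
    (fun i => a.testBit i ≠ a.testBit (i-1) ∧ b.testBit i = b.testBit (i-1))


lemma nps_lt (s : ℕ) : ∑ k ∈ Finset.Icc 1 s, 2^(2*k-1) < 2^(2*s) := by
  induction s with
  | zero => simp
  | succ s ih =>
    rw [Finset.sum_Icc_succ_top (by omega)]
    have h1 : 2*(s+1)-1 = 2*s+1 := by omega
    have h2 : 2*(s+1) = 2*s+1+1 := by omega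
    rw [h1, h2]
    have : (2:ℕ)^(2*s) ≤ 2^(2*s+1) := Nat.pow_le_pow_right (by norm_num) (by omega)
    calc ∑ k ∈ Finset.Icc 1 s, 2^(2*k-1) + 2^(2*s+1) < 2^(2*s+1) + 2^(2*s+1) := by omega
      _ = 2^(2*s+1+1) := by ring

lemma nps_testBit (s j : ℕ) :
    (∑ k ∈ Finset.Icc 1 s, 2^(2*k-1)).testBit j = decide (j % 2 = 1 ∧ j < 2*s) := by
  induction s generalizing j with
  | zero => simp
  | succ s ih =>
    rw [Finset.sum_Icc_succ_top (by omega)]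
    have h1 : 2*(s+1)-1 = 2*s+1 := by omega
    rw [h1, add_comm]
    have hb : ∑ k ∈ Finset.Icc 1 s, 2^(2*k-1) < 2^(2*s+1) :=
      lt_of_lt_of_le (nps_lt s) (Nat.pow_le_pow_right (by norm_num) (by omega))
    have : (2:ℕ)^(2*s+1) + ∑ k ∈ Finset.Icc 1 s, 2^(2*k-1)
        = 2^(2*s+1) * 1 + ∑ k ∈ Finset.Icc 1 s, 2^(2*k-1) := by ring
    rw [this, Nat.two_pow_add_eq_or_of_lt hb, Nat.testBit_lor, Nat.mul_one, Nat.testBit_two_pow, ih]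
    rw [Bool.eq_iff_iff]
    simp only [Bool.or_eq_true, decide_eq_true_eq]
    omega

lemma nps_key (s : ℕ) : ∀ m, m ≤ s →
    3 * ∑ k ∈ Finset.range (2*m), (bit (∑ k ∈ Finset.Icc 1 s, 2^(2*k-1)) k : ℤ) * 2^k
      = 2^(2*m+1) - 2 := by
  intro m
  induction m with
  | zero => simp
  | succ m ih =>
    intro h
    have h2 : 2*(m+1) = 2*m + 1 + 1 := by ring
    rw [h2, Finset.sum_range_succ, Finset.sum_range_succ]
    have e1 : bit (∑ k ∈ Finset.Icc 1 s, 2^(2*k-1)) (2*m) = 0 := by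
      simp [bit, nps_testBit]
    have e2 : bit (∑ k ∈ Finset.Icc 1 s, 2^(2*k-1)) (2*m+1) = 1 := by
      simp [bit, nps_testBit]; omega
    rw [e1, e2]
    push_cast
    rw [mul_add, mul_add, ih (by omega)]
    ring

/-- For `n' = 2 + 2^3 + ⋯ + 2^{2s−1}`, explicit values of `α_{2m}` and `α_{2m−1}`. -/
theorem alpha_alternating (s m : ℕ) (hs : 1 ≤ s) (hm : 1 ≤ m) (hms : m ≤ s) :
    (alpha (∑ k ∈ Finset.Icc 1 s, 2^(2*k-1)) (2*m) : ℝ) = (2^(2*m+1) - 2) / 3 ∧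
    (alpha (∑ k ∈ Finset.Icc 1 s, 2^(2*k-1)) (2*m-1) : ℝ) = (2^(2*m) + 2) / 3 := by
  obtain ⟨m, rfl⟩ : ∃ m', m = m' + 1 := ⟨m - 1, by omega⟩
  have hms' : m ≤ s := by omega
  have hk1 := nps_key s (m+1) hms
  have hk0 := nps_key s m hms'
  have e0 : bit (∑ k ∈ Finset.Icc 1 s, 2^(2*k-1)) (2*m) = 0 := by
    simp [bit, nps_testBit]
  have e1 : bit (∑ k ∈ Finset.Icc 1 s, 2^(2*k-1)) (2*m+1) = 1 := by
    simp [bit, nps_testBit]; omega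
  have e2 : bit (∑ k ∈ Finset.Icc 1 s, 2^(2*k-1)) (2*(m+1)) = 0 := by
    simp [bit, nps_testBit]
  constructor
  · unfold alpha
    rw [e2]
    have hS : (0:ℤ) ≤ ∑ k ∈ Finset.range (2*(m+1)),
        (bit (∑ k ∈ Finset.Icc 1 s, 2^(2*k-1)) k : ℤ) * 2^k := by positivity
    rw [show ((0:ℕ):ℤ) * 2^(2*(m+1)) = 0 by push_cast; ring, sub_zero, abs_of_nonneg hS]
    have := congrArg (fun z : ℤ => (z : ℝ)) hk1
    push_cast at this ⊢
    linarith
  · unfold alpha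
    rw [show 2*(m+1) - 1 = 2*m + 1 from by omega, Finset.sum_range_succ, e0, e1]
    rw [show ((0:ℕ):ℤ) * 2^(2*m) = 0 from by push_cast; ring, add_zero]
    set S := ∑ k ∈ Finset.range (2*m),
        (bit (∑ k ∈ Finset.Icc 1 s, 2^(2*k-1)) k : ℤ) * 2^k with hSdef
    have hpos : (0:ℤ) ≤ 2^(2*m+1) := by positivity
    have hlt : S ≤ 2^(2*m+1) := by linarith
    rw [show ((1:ℕ):ℤ) * 2^(2*m+1) = 2^(2*m+1) from by push_cast; ring,
      abs_of_nonpos (by linarith), neg_sub]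
    have := congrArg (fun z : ℤ => (z : ℝ)) hk0
    push_cast at this ⊢
    have hp : (2:ℝ)^(2*(m+1)) = 2 * 2^(2*m+1) := by
      rw [show 2*(m+1) = (2*m+1)+1 from by ring, pow_succ]; ring
    rw [hp]
    linarith
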